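/- arXiv:2310.18715 — 2 statements merged into one kernel-verified Lean document; each statement's English description precedes it below -/
import Mathlib

section
/- Let Z_1, …, Z_K be independent real random variables, let μ ∈ ℝ, J > 0, and 0 < q' < q < 1, and suppose P(Z_k ≤ μ − J) ≤ q' for every k ∈ {1, …, K}. Let 𝒬_q(Z_1, …, Z_K) denote the ⌈qK⌉-th smallest value among Z_1, …, Z_K. Then P( 𝒬_q(Z_1, …, Z_K) ≤ μ − J ) ≤ exp(−2K(q − q')²). -/
open MeasureTheory ProbabilityTheory Real

/-- The `j`-th smallest value (1-indexed) among `z 0, …, z (K-1)`. -/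
noncomputable def orderStat {K : ℕ} (z : Fin K → ℝ) (j : ℕ) : ℝ :=
  ((List.ofFn z).insertionSort (· ≤ ·)).getD (j - 1) 0

/-- The `q`-th lower empirical quantile: the `⌈qK⌉`-th smallest value. -/
noncomputable def lowerQuantile {K : ℕ} (q : ℝ) (z : Fin K → ℝ) : ℝ :=
  orderStat z ⌈q * (K : ℝ)⌉₊

/-- Hoeffding's lemma for Bernoulli-type moment generating functions. -/
lemma bernoulli_mgf_le {p t : ℝ} (hp0 : 0 ≤ p) (hp1 : p < 1) (ht : 0 ≤ t) :
    1 - p + p * exp t ≤ exp (p * t + t ^ 2 / 8) := by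
  set u : ℝ → ℝ := fun s => 1 - p + p * exp s with hu
  have hupos : ∀ s, 0 < u s := fun s => by
    have := exp_pos s
    have : 0 ≤ p * exp s := mul_nonneg hp0 this.le
    simp only [hu]; linarith
  -- g = derivative of F
  set g : ℝ → ℝ := fun s => p + s / 4 - p * exp s / u s with hg
  set F : ℝ → ℝ := fun s => p * s + s ^ 2 / 8 - Real.log (u s) with hF
  have hud : ∀ s, HasDerivAt u (p * exp s) s := fun s => by
    exact ((Real.hasDerivAt_exp s).const_mul p).const_add (1 - p)
  have hgd : ∀ s, HasDerivAt g (1 / 4 - p * exp s * (1 - p) / (u s) ^ 2) s := by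
    intro s
    have h1 : HasDerivAt (fun s => p * exp s) (p * exp s) s :=
      (Real.hasDerivAt_exp s).const_mul p
    have h2 : HasDerivAt (fun s => p * exp s / u s)
        ((p * exp s * u s - p * exp s * (p * exp s)) / (u s) ^ 2) s :=
      h1.div (hud s) (hupos s).ne'
    have h3 : HasDerivAt (fun s => p + s / 4) (1 / 4) s := by
      simpa using ((hasDerivAt_id s).div_const 4).const_add p
    have := h3.sub h2
    refine this.congr_deriv ?_
    have hus := (hupos s).ne'
    congr 2
    simp only [hu]
    ring
  have hgderiv_nonneg : ∀ s, 0 ≤ 1 / 4 - p * exp s * (1 - p) / (u s) ^ 2 := by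
    intro s
    have hus := hupos s
    rw [sub_nonneg, div_le_iff₀ (by positivity)]
    have : u s = 1 - p + p * exp s := rfl
    nlinarith [sq_nonneg (p * exp s - (1 - p)), exp_pos s]
  have hgmono : Monotone g := by
    apply monotone_of_deriv_nonneg
    · exact fun s => (hgd s).differentiableAt
    · intro s; rw [(hgd s).deriv]; exact hgderiv_nonneg s
  have hg0 : g 0 = 0 := by simp [hg, hu]
  have hgnonneg : ∀ s, 0 ≤ s → 0 ≤ g s := fun s hs => hg0 ▸ hgmono hs
  have hFd : ∀ s, HasDerivAt F (g s) s := by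
    intro s
    have h1 : HasDerivAt (fun s => p * s + s ^ 2 / 8) (p + s / 4) s := by
      have := ((hasDerivAt_pow 2 s).div_const 8).const_add (p * s)
      have h2 : HasDerivAt (fun x : ℝ => p * x) p s := by
        simpa using (hasDerivAt_id s).const_mul p
      refine (h2.add ((hasDerivAt_pow 2 s).div_const 8)).congr_deriv ?_
      ring
    have h2 : HasDerivAt (fun s => Real.log (u s)) (p * exp s / u s) s :=
      (hud s).log (hupos s).ne'
    exact h1.sub h2
  have hFmono : MonotoneOn F (Set.Ici (0 : ℝ)) := by
    apply monotoneOn_of_deriv_nonneg (convex_Ici 0)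
    · exact (fun s _ => ((hFd s).differentiableAt).continuousAt.continuousWithinAt)
    · exact fun s _ => ((hFd s).differentiableAt).differentiableWithinAt
    · intro s hs
      rw [(hFd s).deriv]
      exact hgnonneg s (le_of_lt (by simpa using hs))
  have hF0 : F 0 = 0 := by simp [hF, hu]
  have hFt : 0 ≤ F t := hF0 ▸ hFmono Set.self_mem_Ici ht ht
  have : Real.log (u t) ≤ p * t + t ^ 2 / 8 := by simp only [hF] at hFt; linarith
  calc 1 - p + p * exp t = u t := rfl
    _ ≤ exp (p * t + t ^ 2 / 8) := by
        rw [← Real.exp_log (hupos t)]; exact exp_le_exp.mpr this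

lemma count_ge_of_orderStat_le {K : ℕ} (z : Fin K → ℝ) (j : ℕ) (hj1 : 1 ≤ j)
    (hjK : j ≤ K) (c : ℝ) (h : orderStat z j ≤ c) :
    j ≤ (Finset.univ.filter (fun k => z k ≤ c)).card := by
  classical
  set l := (List.ofFn z).insertionSort (· ≤ ·) with hl
  have hlen : l.length = K := by
    rw [hl, List.length_insertionSort, List.length_ofFn]
  have hsorted : l.Pairwise (· ≤ ·) := List.pairwise_insertionSort _ _
  have hj1' : j - 1 < l.length := by omega
  have hget : l.get ⟨j - 1, hj1'⟩ ≤ c := by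
    have : l.getD (j - 1) 0 = l.get ⟨j - 1, hj1'⟩ := List.getD_eq_get _ _ ⟨j - 1, hj1'⟩
    rw [orderStat, ← hl, this] at h
    exact h
  -- every element of take j l is ≤ c
  have htake : ∀ x ∈ l.take j, x ≤ c := by
    intro x hx
    obtain ⟨i, hi, hix⟩ := List.getElem_of_mem hx
    have hi' : i < j := lt_of_lt_of_le hi (by simp [List.length_take])
    have hi'' : i < l.length := by
      have := hi; rw [List.length_take] at this; omega
    have hEq : (l.take j)[i]'hi = l[i]'hi'' := List.getElem_take
    have hle : l[i]'hi'' ≤ l.get ⟨j - 1, hj1'⟩ :=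
      hsorted.rel_get_of_le (show (⟨i, hi''⟩ : Fin l.length) ≤ ⟨j - 1, hj1'⟩ by
        simp only [Fin.mk_le_mk]; omega)
    rw [← hix, hEq]
    exact le_trans hle hget
  have hcount : j ≤ l.countP (fun x => decide (x ≤ c)) := by
    calc j = (l.take j).length := by simp [List.length_take]; omega
      _ = (l.take j).countP (fun x => decide (x ≤ c)) := by
          rw [eq_comm, List.countP_eq_length]
          intro a ha; simpa using htake a ha
      _ ≤ l.countP (fun x => decide (x ≤ c)) := (List.take_sublist _ _).countP_le
  have hperm : l.countP (fun x => decide (x ≤ c))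
      = (List.ofFn z).countP (fun x => decide (x ≤ c)) :=
    (List.perm_insertionSort _ _).countP_eq _
  rw [hperm] at hcount
  refine le_trans hcount (le_of_eq ?_)
  rw [List.ofFn_eq_map, List.countP_map]
  have : (Finset.univ : Finset (Fin K)).val = ↑(List.finRange K) := by
    rfl
  simp only [Finset.card_def, Finset.filter_val, this, Multiset.filter_coe,
    Multiset.coe_card, List.countP_eq_length_filter, Function.comp_def]

/-- Lemma A2: if each of `K` independent random variables undershoots `m - J` with
probability at most `q' < q`, then their empirical `q`-quantile undershoots `m - J` with
probability at most `exp(−2K(q − q')²)`. -/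
theorem quantile_lower_bound
    {Ω : Type*} [MeasurableSpace Ω] (μ : Measure Ω) [IsProbabilityMeasure μ]
    (K : ℕ) (hK : 0 < K) (Z : Fin K → Ω → ℝ)
    (hmeas : ∀ k, Measurable (Z k))
    (hindep : iIndepFun Z μ)
    (m J q q' : ℝ) (hJ : 0 < J) (hq'0 : 0 < q') (hq'q : q' < q) (hq1 : q < 1)
    (hbound : ∀ k, μ {ω | Z k ω ≤ m - J} ≤ ENNReal.ofReal q') :
    μ {ω | lowerQuantile q (fun k => Z k ω) ≤ m - J}
      ≤ ENNReal.ofReal (Real.exp (-2 * K * (q - q') ^ 2)) := by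
  classical
  set c : ℝ := m - J with hc
  set t : ℝ := 4 * (q - q') with hT
  have ht : 0 < t := by have := hq'q; simp only [hT]; linarith
  have hq0 : 0 < q := lt_trans hq'0 hq'q
  set φ : ℝ → ℝ := fun x => if x ≤ c then 1 else 0 with hφ
  have hφmeas : Measurable φ := by
    apply Measurable.ite (measurableSet_le measurable_id measurable_const) <;>
      exact measurable_const
  set Y : Fin K → Ω → ℝ := fun k => φ ∘ Z k with hY
  have hYmeas : ∀ k, Measurable (Y k) := fun k => hφmeas.comp (hmeas k)
  have hYindep : iIndepFun Y μ :=
    hindep.comp (fun _ => φ) (fun _ => hφmeas)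
  set A : Fin K → Set Ω := fun k => {ω | Z k ω ≤ c} with hA
  have hAmeas : ∀ k, MeasurableSet (A k) :=
    fun k => measurableSet_le (hmeas k) measurable_const
  have hAle : ∀ k, (μ (A k)).toReal ≤ q' := fun k =>
    ENNReal.toReal_le_of_le_ofReal hq'0.le (hbound k)
  -- key pointwise identity
  have hexp : ∀ k ω, exp (t * Y k ω) = (A k).indicator (fun _ => exp t - 1) ω + 1 := by
    intro k ω
    by_cases h : Z k ω ≤ c <;>
      simp [hY, hφ, hA, h, Set.indicator_of_mem, Set.indicator_of_notMem, Set.mem_setOf_eq]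
  have hint : ∀ k, Integrable (fun ω => exp (t * Y k ω)) μ := by
    intro k
    have : Integrable (fun ω => (A k).indicator (fun _ => exp t - 1) ω + 1) μ :=
      ((integrable_const (exp t - 1)).indicator (hAmeas k)).add (integrable_const 1)
    exact this.congr (Filter.Eventually.of_forall fun ω => (hexp k ω).symm)
  -- mgf bound for each Y k
  have hmgf : ∀ k, mgf (Y k) μ t ≤ exp (q' * t + t ^ 2 / 8) := by
    intro k
    have h1 : mgf (Y k) μ t = (μ (A k)).toReal * (exp t - 1) + 1 := by
      rw [mgf]
      simp_rw [hexp]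
      rw [integral_add (((integrable_const (exp t - 1)).indicator (hAmeas k)))
        (integrable_const 1), integral_indicator_const _ (hAmeas k), integral_const]
      simp [Measure.real]
    rw [h1]
    have h2 : (μ (A k)).toReal * (exp t - 1) + 1 ≤ 1 - q' + q' * exp t := by
      have hge : (1 : ℝ) ≤ exp t := one_le_exp ht.le
      nlinarith [hAle k, ENNReal.toReal_nonneg (a := μ (A k))]
    exact h2.trans (bernoulli_mgf_le hq'0.le (hq'q.trans hq1) ht.le)
  -- event inclusion
  set S : Ω → ℝ := ∑ k, Y k with hS
  have hsub : {ω | lowerQuantile q (fun k => Z k ω) ≤ c} ⊆ {ω | q * K ≤ S ω} := by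
    intro ω hω
    simp only [Set.mem_setOf_eq] at hω ⊢
    set j : ℕ := ⌈q * (K : ℝ)⌉₊ with hj
    have hj1 : 1 ≤ j := Nat.one_le_iff_ne_zero.mpr (by
      simp only [hj, ne_eq, Nat.ceil_eq_zero, not_le]
      positivity)
    have hjK : j ≤ K := Nat.ceil_le.mpr (by nlinarith [Nat.cast_nonneg (α := ℝ) K])
    have hcard := count_ge_of_orderStat_le (fun k => Z k ω) j hj1 hjK c hω
    have hSω : S ω = ((Finset.univ.filter (fun k => Z k ω ≤ c)).card : ℝ) := by
      simp only [hS, Finset.sum_apply, hY, hφ, Function.comp_apply]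
      rw [Finset.card_filter]
      push_cast
      exact Finset.sum_congr rfl fun k _ => by split <;> simp
    rw [hSω]
    calc q * K ≤ (j : ℝ) := Nat.le_ceil _
      _ ≤ _ := by exact_mod_cast hcard
  -- Chernoff
  have hchern := measure_ge_le_exp_mul_mgf (μ := μ) (X := S) (q * K) ht.le
    (hYindep.integrable_exp_mul_sum hYmeas (fun k _ => hint k))
  have hprod : mgf S μ t = ∏ k, mgf (Y k) μ t := hYindep.mgf_sum hYmeas Finset.univ
  have hmgfS : mgf S μ t ≤ exp (q' * t + t ^ 2 / 8) ^ K := by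
    rw [hprod]
    calc ∏ k, mgf (Y k) μ t ≤ ∏ _k : Fin K, exp (q' * t + t ^ 2 / 8) :=
          Finset.prod_le_prod (fun k _ => mgf_nonneg) (fun k _ => hmgf k)
      _ = exp (q' * t + t ^ 2 / 8) ^ K := by simp
  have hfinal : (μ {ω | q * K ≤ S ω}).toReal ≤ exp (-2 * K * (q - q') ^ 2) := by
    refine hchern.trans ?_
    calc exp (-t * (q * K)) * mgf S μ t
        ≤ exp (-t * (q * K)) * exp (q' * t + t ^ 2 / 8) ^ K := by
          exact mul_le_mul_of_nonneg_left hmgfS (exp_pos _).le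
      _ = exp (-2 * K * (q - q') ^ 2) := by
          rw [← Real.exp_nat_mul, ← Real.exp_add]
          congr 1
          simp only [hT]
          ring
  calc μ {ω | lowerQuantile q (fun k => Z k ω) ≤ m - J} ≤ μ {ω | q * K ≤ S ω} :=
        measure_mono hsub
    _ = ENNReal.ofReal (μ {ω | q * K ≤ S ω}).toReal :=
        (ENNReal.ofReal_toReal (measure_ne_top μ _)).symm
    _ ≤ ENNReal.ofReal (Real.exp (-2 * K * (q - q') ^ 2)) :=
        ENNReal.ofReal_le_ofReal hfinal
end

section
/- Let Ĵ_1, …, Ĵ_K be independent real random variables and J ∈ ℝ such that P(Ĵ_k ≤ J) ≥ 1/2 for every k ∈ {1, …, K}. Then for every q ∈ (0, 1/2), P( 𝒬_q(Ĵ_1, …, Ĵ_K) ≤ J ) ≥ 1 − exp(−2K(1/2 − q)²), where 𝒬_q(Ĵ_1, …, Ĵ_K) denotes the ⌈qK⌉-th smallest value among Ĵ_1, …, Ĵ_K. -/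
open MeasureTheory ProbabilityTheory Real

lemma countP_eq_sum_ite {α : Type*} (p : α → Bool) (l : List α) :
    l.countP p = (l.map (fun x => if p x then 1 else 0)).sum := by
  induction l with
  | nil => simp
  | cons a l ih => by_cases h : p a <;> simp [List.countP_cons, ih, h, Nat.add_comm]

lemma count_eq_sum {K : ℕ} (z : Fin K → ℝ) (J : ℝ) :
    ((List.ofFn z).countP (fun x => decide (x ≤ J)) : ℝ)
      = ∑ k : Fin K, (if z k ≤ J then (1:ℝ) else 0) := by
  rw [List.ofFn_eq_map, List.countP_map, Finset.sum_boole]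
  congr 1
  rw [Finset.card_filter, Finset.sum, Fin.univ_def]
  show _ = (Multiset.map _ (List.finRange K : Multiset (Fin K))).sum
  rw [Multiset.map_coe, Multiset.sum_coe, countP_eq_sum_ite]
  simp

lemma orderStat_le_of_count {K : ℕ} (z : Fin K → ℝ) (J : ℝ) (j : ℕ) (hj : 1 ≤ j)
    (h : j ≤ (List.ofFn z).countP (fun x => decide (x ≤ J))) : orderStat z j ≤ J := by
  set l := (List.ofFn z).insertionSort (· ≤ ·) with hl
  have hsort : l.Pairwise (· ≤ ·) := List.pairwise_insertionSort _ _
  have hperm : List.Perm l (List.ofFn z) := List.perm_insertionSort _ _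
  have hcount : j ≤ l.countP (fun x => decide (x ≤ J)) := by rw [hperm.countP_eq]; exact h
  have hcl : l.countP (fun x => decide (x ≤ J)) ≤ l.length := List.countP_le_length
  have hjl : j - 1 < l.length := by omega
  rw [orderStat]
  show l.getD (j - 1) 0 ≤ J
  rw [List.getD_eq_getElem?_getD, List.getElem?_eq_getElem hjl]
  simp only [Option.getD_some]
  by_contra hcon
  push_neg at hcon
  have hdrop : (l.drop (j - 1)).countP (fun x => decide (x ≤ J)) = 0 := by
    rw [List.countP_eq_zero]
    intro x hx
    obtain ⟨t, ht, rfl⟩ := List.mem_iff_getElem.mp hx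
    rw [List.getElem_drop]
    simp only [decide_eq_true_eq, not_le]
    refine lt_of_lt_of_le hcon ?_
    have := hsort.rel_get_of_le (a := ⟨j - 1, hjl⟩)
      (b := ⟨j - 1 + t, by have := ht; simp [List.length_drop] at this; omega⟩)
      (by simp [Fin.le_def])
    simpa [List.get_eq_getElem] using this
  have : l.countP (fun x => decide (x ≤ J)) ≤ j - 1 := by
    conv_lhs => rw [← List.take_append_drop (j - 1) l, List.countP_append]
    rw [hdrop]
    have h1 : (l.take (j-1)).countP (fun x => decide (x ≤ J)) ≤ (l.take (j-1)).length :=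
      List.countP_le_length
    simp only [List.length_take] at h1
    omega
  omega

lemma indicator_mgf_le {t p : ℝ} (ht : t ≤ 0) (hp : 1/2 ≤ p) :
    (exp t - 1) * p + 1 ≤ exp (t^2/8 + t/2) := by
  have hexp : exp t ≤ 1 := exp_le_one_iff.mpr ht
  have h1 : (exp t - 1) * p + 1 ≤ (exp t - 1) * (1/2) + 1 := by nlinarith
  have e1 : exp (t/2) * exp (t/2) = exp t := by rw [← Real.exp_add]; ring_nf
  have e2 : exp (-(t/2)) * exp (t/2) = 1 := by rw [← Real.exp_add]; simp
  have h2 : (exp t - 1) * (1/2) + 1 = cosh (t/2) * exp (t/2) := by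
    rw [Real.cosh_eq]; linear_combination -(e1 + e2) / 2
  have h3 : cosh (t/2) * exp (t/2) ≤ exp ((t/2)^2/2) * exp (t/2) := by
    have := Real.cosh_le_exp_half_sq (t/2)
    nlinarith [exp_pos (t/2)]
  have h4 : exp ((t/2)^2/2) * exp (t/2) = exp (t^2/8 + t/2) := by
    rw [← Real.exp_add]; ring_nf
  linarith

lemma mgf_indicator {Ω : Type*} [MeasurableSpace Ω] (μ : Measure Ω) [IsProbabilityMeasure μ]
    (P : Ω → Prop) [DecidablePred P] (hA : MeasurableSet {ω | P ω}) (t : ℝ) :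
    mgf (fun ω => if P ω then (1:ℝ) else 0) μ t = (exp t - 1) * (μ {ω | P ω}).toReal + 1 := by
  have heq : (fun ω => exp (t * (if P ω then (1:ℝ) else 0)))
      = fun ω => Set.indicator {ω | P ω} (fun _ => exp t - 1) ω + 1 := by
    funext ω
    by_cases h : P ω <;>
      simp [h, Set.indicator_of_mem, Set.indicator_of_notMem, Set.mem_setOf_eq]
  rw [mgf, heq, integral_add (((integrable_const _).indicator hA)) (integrable_const 1),
    integral_indicator_const _ hA, integral_const]
  simp [measure_univ, mul_comm]
  exact Or.inl rfl

lemma integrable_exp_indicator {Ω : Type*} [MeasurableSpace Ω] (μ : Measure Ω)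
    [IsProbabilityMeasure μ] (P : Ω → Prop) [DecidablePred P]
    (hA : MeasurableSet {ω | P ω}) (t : ℝ) :
    Integrable (fun ω => exp (t * (if P ω then (1:ℝ) else 0))) μ := by
  have heq : (fun ω => exp (t * (if P ω then (1:ℝ) else 0)))
      = fun ω => Set.indicator {ω | P ω} (fun _ => exp t - 1) ω + 1 := by
    funext ω
    by_cases h : P ω <;>
      simp [h, Set.indicator_of_mem, Set.indicator_of_notMem, Set.mem_setOf_eq]
  rw [heq]
  exact ((integrable_const _).indicator hA).add (integrable_const 1)

/-- Uncertainty quantification for ROAM: if each of `K` independent value estimates is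
median-unbiased for `J` (falls at or below `J` with probability at least `1/2`), then for
every `q ∈ (0, 1/2)` the empirical `q`-quantile of the estimates lies at or below `J`
with probability at least `1 − exp(−2K(1/2 − q)²)`. -/
theorem quantile_lower_confidence_bound
    {Ω : Type*} [MeasurableSpace Ω] (μ : Measure Ω) [IsProbabilityMeasure μ]
    (K : ℕ) (hK : 0 < K) (Jhat : Fin K → Ω → ℝ)
    (hmeas : ∀ k, Measurable (Jhat k))
    (hindep : iIndepFun Jhat μ)
    (J : ℝ)
    (hmedian : ∀ k, ENNReal.ofReal (1 / 2) ≤ μ {ω | Jhat k ω ≤ J}) :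
    ∀ q : ℝ, q ∈ Set.Ioo (0 : ℝ) (1 / 2) →
      ENNReal.ofReal (1 - Real.exp (-2 * K * (1 / 2 - q) ^ 2)) ≤
        μ {ω | lowerQuantile q (fun k => Jhat k ω) ≤ J} := by
  intro q hq
  obtain ⟨hq0, hq2⟩ := hq
  classical
  set X : Fin K → Ω → ℝ := fun k ω => if Jhat k ω ≤ J then (1:ℝ) else 0 with hX
  have hAk : ∀ k, MeasurableSet {ω | Jhat k ω ≤ J} :=
    fun k => measurableSet_le (hmeas k) measurable_const
  have hXmeas : ∀ k, Measurable (X k) := fun k =>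
    Measurable.ite (hAk k) measurable_const measurable_const
  have hXindep : iIndepFun X μ := by
    have := hindep.comp (fun _ (x : ℝ) => if x ≤ J then (1:ℝ) else 0)
      (fun _ => Measurable.ite measurableSet_Iic measurable_const measurable_const)
    exact this
  -- parameters
  set t : ℝ := 4 * q - 2 with hT
  have ht : t ≤ 0 := by simp only [hT]; linarith
  set a : ℝ := q * K with ha
  set E : ℝ := Real.exp (-2 * K * (1 / 2 - q) ^ 2) with hE
  set j : ℕ := ⌈q * (K : ℝ)⌉₊ with hj
  have hKpos : (0:ℝ) < K := by exact_mod_cast hK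
  have hqK : 0 < q * K := by positivity
  have hj1 : 1 ≤ j := Nat.one_le_iff_ne_zero.mpr (by
    simp only [hj]; exact Nat.ceil_pos.mpr hqK |>.ne')
  -- integrability of each exp(t * X k)
  have hint : ∀ k, Integrable (fun ω => exp (t * X k ω)) μ := fun k =>
    integrable_exp_indicator μ (fun ω => Jhat k ω ≤ J) (hAk k) t
  -- mgf bound for each
  have hmgf_le : ∀ k, mgf (X k) μ t ≤ exp (t^2/8 + t/2) := by
    intro k
    rw [hX]
    rw [mgf_indicator μ (fun ω => Jhat k ω ≤ J) (hAk k) t]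
    apply indicator_mgf_le ht
    have h2 := hmedian k
    have : (ENNReal.ofReal (1/2)).toReal ≤ (μ {ω | Jhat k ω ≤ J}).toReal :=
      ENNReal.toReal_mono (measure_ne_top _ _) h2
    simpa using this
  -- mgf of sum
  have hmgf_sum : mgf (∑ k, X k) μ t ≤ exp (K * (t^2/8 + t/2)) := by
    rw [hXindep.mgf_sum hXmeas Finset.univ]
    calc ∏ k : Fin K, mgf (X k) μ t ≤ ∏ _k : Fin K, exp (t^2/8 + t/2) :=
          Finset.prod_le_prod (fun k _ => mgf_nonneg) (fun k _ => hmgf_le k)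
      _ = exp (K * (t^2/8 + t/2)) := by
          rw [Finset.prod_const, ← Real.exp_nat_mul]; simp
  -- Chernoff
  have hchern : (μ {ω | (∑ k, X k) ω ≤ a}).toReal ≤ E := by
    have h1 := measure_le_le_exp_mul_mgf (μ := μ) (X := ∑ k, X k) a ht
      (hXindep.integrable_exp_mul_sum hXmeas (fun k _ => hint k))
    refine h1.trans ?_
    calc exp (-t * a) * mgf (∑ k, X k) μ t
        ≤ exp (-t * a) * exp (K * (t^2/8 + t/2)) := by
          exact mul_le_mul_of_nonneg_left hmgf_sum (exp_pos _).le
      _ = E := by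
          rw [← Real.exp_add, hE]
          congr 1
          rw [hT, ha]; ring
  have hchernE : μ {ω | (∑ k, X k) ω ≤ a} ≤ ENNReal.ofReal E := by
    rw [← ENNReal.ofReal_toReal (measure_ne_top μ _)]
    exact ENNReal.ofReal_le_ofReal hchern
  -- event inclusion
  set B : Set Ω := {ω | (j : ℝ) ≤ (∑ k, X k) ω} with hB
  have hSmeas : Measurable (∑ k, X k) := by
    have h := Finset.measurable_sum (f := X) Finset.univ (fun k _ => hXmeas k)
    convert h using 1
    funext ω
    simp [Finset.sum_apply]
  have hBmeas : MeasurableSet B := measurableSet_le measurable_const hSmeas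
  have hsum_count : ∀ ω, (∑ k, X k) ω
      = ((List.ofFn (fun k => Jhat k ω)).countP (fun x => decide (x ≤ J)) : ℝ) := by
    intro ω
    rw [count_eq_sum]
    simp [hX, Finset.sum_apply]
  have hBT : B ⊆ {ω | lowerQuantile q (fun k => Jhat k ω) ≤ J} := by
    intro ω hω
    simp only [hB, Set.mem_setOf_eq, hsum_count ω] at hω
    have hcount : j ≤ (List.ofFn (fun k => Jhat k ω)).countP (fun x => decide (x ≤ J)) := by
      exact_mod_cast hω
    exact orderStat_le_of_count _ J j hj1 hcount
  -- complement bound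
  have hcompl : Bᶜ ⊆ {ω | (∑ k, X k) ω ≤ a} := by
    intro ω hω
    simp only [hB, Set.mem_compl_iff, Set.mem_setOf_eq, not_le] at hω
    simp only [Set.mem_setOf_eq]
    rw [hsum_count ω] at hω ⊢
    set m := (List.ofFn (fun k => Jhat k ω)).countP (fun x => decide (x ≤ J)) with hm
    have hmj : m < j := by exact_mod_cast hω
    have hceil : (j : ℝ) < q * K + 1 := Nat.ceil_lt_add_one hqK.le
    have : (m : ℝ) ≤ (j : ℝ) - 1 := by
      have : m ≤ j - 1 := by omega
      have := (Nat.cast_le (α := ℝ)).mpr this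
      rw [Nat.cast_sub hj1] at this
      simpa using this
    rw [ha]
    linarith
  have hcompl_le : μ Bᶜ ≤ ENNReal.ofReal E := le_trans (measure_mono hcompl) hchernE
  have hone : μ B + μ Bᶜ = 1 := by
    rw [measure_add_measure_compl hBmeas]; exact measure_univ
  have hBlow : 1 - ENNReal.ofReal E ≤ μ B := by
    rw [tsub_le_iff_right]
    calc (1 : ENNReal) = μ B + μ Bᶜ := hone.symm
      _ ≤ μ B + ENNReal.ofReal E := add_le_add_right hcompl_le _
  calc ENNReal.ofReal (1 - E) = ENNReal.ofReal 1 - ENNReal.ofReal E :=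
        ENNReal.ofReal_sub 1 (exp_nonneg _)
    _ = 1 - ENNReal.ofReal E := by rw [ENNReal.ofReal_one]
    _ ≤ μ B := hBlow
    _ ≤ μ {ω | lowerQuantile q (fun k => Jhat k ω) ≤ J} := measure_mono hBT
end
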